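/- Let A be the 3-dimensional algebra over ℂ with basis {e₁, e₂, e₃} and nonzero products e₁∘e₁ = e₂, e₁∘e₃ = e₁, e₃∘e₁ = -(1/2)e₁, e₃∘e₂ = -2e₂, e₂∘e₃ = e₂, e₃∘e₃ = e₃, and let B be the symmetric bilinear form with B(e₁,e₁) = -2s, B(e₂,e₃) = B(e₃,e₂) = s, and all other pairings zero, with s ≠ 0. Then (A,∘,B) is a quadratic Novikov algebra. -/

import Mathlib

/-- The 3-dimensional algebra over ℂ with basis {e₁,e₂,e₃} (b 0 = e₁,
b 1 = e₂, b 2 = e₃), nonzero products e₁∘e₁ = e₂, e₁∘e₃ = e₁, e₃∘e₁ = -(1/2)e₁,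
e₃∘e₂ = -2e₂, e₂∘e₃ = e₂, e₃∘e₃ = e₃, and the symmetric bilinear form with
B(e₁,e₁) = -2s, B(e₂,e₃) = B(e₃,e₂) = s (s ≠ 0) and all other pairings zero, is a
quadratic Novikov algebra. -/
theorem three_dim_D6_quadratic_novikov
    {A : Type*} [AddCommGroup A] [Module ℂ A]
    (mul : A →ₗ[ℂ] A →ₗ[ℂ] A) (B : LinearMap.BilinForm ℂ A)
    (b : Module.Basis (Fin 3) ℂ A) (s : ℂ) (hs : s ≠ 0)
    (m11 : mul (b 0) (b 0) = b 1)
    (m12 : mul (b 0) (b 1) = 0)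
    (m13 : mul (b 0) (b 2) = b 0)
    (m21 : mul (b 1) (b 0) = 0)
    (m22 : mul (b 1) (b 1) = 0)
    (m23 : mul (b 1) (b 2) = b 1)
    (m31 : mul (b 2) (b 0) = (-(1/2) : ℂ) • b 0)
    (m32 : mul (b 2) (b 1) = (-2 : ℂ) • b 1)
    (m33 : mul (b 2) (b 2) = b 2)
    (B11 : B (b 0) (b 0) = -2 * s)
    (B12 : B (b 0) (b 1) = 0) (B13 : B (b 0) (b 2) = 0)
    (B21 : B (b 1) (b 0) = 0) (B22 : B (b 1) (b 1) = 0)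
    (B23 : B (b 1) (b 2) = s)
    (B31 : B (b 2) (b 0) = 0) (B32 : B (b 2) (b 1) = s)
    (B33 : B (b 2) (b 2) = 0) :
    (∀ x y z, mul (mul x y) z - mul x (mul y z) = mul (mul y x) z - mul y (mul x z)) ∧
    (∀ x y z, mul (mul x y) z = mul (mul x z) y) ∧
    (∀ x y, B x y = B y x) ∧
    (∀ x, (∀ y, B x y = 0) → x = 0) ∧
    (∀ x y z, B (mul x y) z = -(B y (mul x z + mul z x))) := by
  have key : ∀ x : A, x = b.repr x 0 • b 0 + b.repr x 1 • b 1 + b.repr x 2 • b 2 := by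
    intro x
    have := b.sum_repr x
    rw [Fin.sum_univ_three] at this
    exact this.symm
  refine ⟨?_, ?_, ?_, ?_, ?_⟩
  · intro x y z
    rw [key x, key y, key z]
    simp only [map_add, map_smul, LinearMap.add_apply, LinearMap.smul_apply,
      m11, m12, m13, m21, m22, m23, m31, m32, m33, map_zero, LinearMap.zero_apply,
      smul_zero, smul_smul, smul_add]
    module
  · intro x y z
    rw [key x, key y, key z]
    simp only [map_add, map_smul, LinearMap.add_apply, LinearMap.smul_apply,
      m11, m12, m13, m21, m22, m23, m31, m32, m33, map_zero, LinearMap.zero_apply,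
      smul_zero, smul_smul, smul_add]
    module
  · intro x y
    rw [key x, key y]
    simp only [map_add, map_smul, LinearMap.add_apply, LinearMap.smul_apply,
      B11, B12, B13, B21, B22, B23, B31, B32, B33, smul_zero, smul_eq_mul]
    ring
  · intro x hx
    have h0 := hx (b 0)
    have h1 := hx (b 1)
    have h2 := hx (b 2)
    rw [key x] at h0 h1 h2
    simp only [map_add, map_smul, LinearMap.add_apply, LinearMap.smul_apply,
      B11, B12, B13, B21, B22, B23, B31, B32, B33, smul_zero, smul_eq_mul,
      add_zero, zero_add] at h0 h1 h2
    have c0 : b.repr x 0 = 0 := by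
      have : b.repr x 0 * (-2 * s) = 0 := by linear_combination h0
      rcases mul_eq_zero.mp this with h | h
      · exact h
      · exact absurd (by linear_combination -h/2) hs
    have c2 : b.repr x 2 = 0 := by
      have h1' : b.repr x 2 * s = 0 := by linear_combination h1
      rcases mul_eq_zero.mp h1' with h | h
      · exact h
      · exact absurd h hs
    have c1 : b.repr x 1 = 0 := by
      have h2' : b.repr x 1 * s = 0 := by linear_combination h2
      rcases mul_eq_zero.mp h2' with h | h
      · exact h
      · exact absurd h hs
    rw [key x, c0, c1, c2]
    simp
  · intro x y z
    rw [key x, key y, key z]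
    simp only [map_add, map_smul, LinearMap.add_apply, LinearMap.smul_apply,
      m11, m12, m13, m21, m22, m23, m31, m32, m33, map_zero, LinearMap.zero_apply,
      smul_zero, smul_smul, smul_add, B11, B12, B13, B21, B22, B23, B31, B32, B33,
      smul_eq_mul]
    ring
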